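/- Let k be a commutative ring, A a commutative k-algebra, E and F two A-modules, p ∈ ℕ, and Δ' ⊆ Δ ⊆ ℕ^p nonempty co-ideals. Then every k[[s]]_Δ-linear map f : E[[s]]_Δ → F[[s]]_Δ is continuous when M[[s]]_Δ ≅ M^Δ is given the product of discrete topologies; f maps the submodule Δ'_E/Δ_E (classes of series whose support is disjoint from Δ') into Δ'_F/Δ_F; and there is a unique k[[s]]_{Δ'}-linear map f̄ : E[[s]]_{Δ'} → F[[s]]_{Δ'} such that τ_{ΔΔ'} ∘ f = f̄ ∘ τ_{ΔΔ'}, where τ_{ΔΔ'} denotes the truncation maps M[[s]]_Δ → M[[s]]_{Δ'} sending Σ_{α∈Δ} m_α s^α to Σ_{α∈Δ'} m_α s^α. -/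

import Mathlib

open scoped Classical

namespace HS

/-- multi-indices in `ℕ^p` -/
abbrev MIdx (p : ℕ) := Fin p → ℕ

/-- the total weight `|α|` of a multi-index -/
def wt {p : ℕ} (α : MIdx p) : ℕ := ∑ i, α i

/-- a non-empty co-ideal of `ℕ^p` -/
def IsCoideal {p : ℕ} (Δ : Set (MIdx p)) : Prop :=
  Δ.Nonempty ∧ ∀ ⦃α : MIdx p⦄, α ∈ Δ → ∀ ⦃β : MIdx p⦄, β ≤ α → β ∈ Δ

/-- Convolution product of two power series, given by their coefficient families:
this is the multiplication of `R[[s]]_Δ` (in terms of representatives). -/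
def sconv {p : ℕ} {R : Type*} [NonUnitalNonAssocSemiring R] (f g : MIdx p → R) : MIdx p → R :=
  fun α => ∑ β ∈ Finset.Iic α, f β * g (α - β)

/-- Applying a series of linear operators to a series of module elements; for an
operator family `f`, `fapply f` is the induced `k[[s]]_Δ`-linear map `f̃ = ∑ f_β s^β`. -/
def fapply {p : ℕ} {k M N : Type*} [Semiring k] [AddCommMonoid M] [AddCommMonoid N]
    [Module k M] [Module k N] (f : MIdx p → (M →ₗ[k] N)) (m : MIdx p → M) : MIdx p → N :=
  fun α => ∑ β ∈ Finset.Iic α, f β (m (α - β))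

/-- a series of scalars acting on a series of module elements:
the module structure of `M[[s]]_Δ` over `A[[s]]_Δ` (in terms of representatives). -/
def smul' {p : ℕ} {A M : Type*} [Semiring A] [AddCommMonoid M] [Module A M]
    (a : MIdx p → A) (m : MIdx p → M) : MIdx p → M :=
  fun α => ∑ β ∈ Finset.Iic α, a β • m (α - β)

/-- the unit (delta) series `1` -/
def one' {p : ℕ} {R : Type*} [Zero R] [One R] : MIdx p → R :=
  fun α => if α = 0 then 1 else 0

/-- `D` is a `(p,Δ)`-variate Hasse–Schmidt derivation of `A` over `k`:
`D_0 = id` and the Leibniz rule `D_α(xy) = ∑_{β+γ=α} D_β(x) D_γ(y)` for `α ∈ Δ`. -/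
def IsHS (k A : Type*) [CommRing k] [CommRing A] [Algebra k A] {p : ℕ}
    (Δ : Set (MIdx p)) (D : MIdx p → Module.End k A) : Prop :=
  D 0 = 1 ∧ ∀ α ∈ Δ, ∀ x y : A,
    D α (x * y) = ∑ β ∈ Finset.Iic α, D β x * D (α - β) y

/-- the honest model of `M[[s]]_Δ`: families of coefficients indexed by `Δ` -/
def SeriesOn {p : ℕ} (Δ : Set (MIdx p)) (M : Type*) := {α : MIdx p // α ∈ Δ} → M

/-- the scalar action of `k[[s]]_Δ` on `M[[s]]_Δ`, in the honest model -/
def ksmulOn {p : ℕ} {Δ : Set (MIdx p)} (hΔ : IsCoideal Δ) {k M : Type*}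
    [Semiring k] [AddCommMonoid M] [Module k M]
    (c : SeriesOn Δ k) (m : SeriesOn Δ M) : SeriesOn Δ M :=
  fun α => ∑ β ∈ (Finset.Iic (α : MIdx p)).attach,
    c ⟨(β : MIdx p), hΔ.2 α.2 (Finset.mem_Iic.mp β.2)⟩ •
      m ⟨(α : MIdx p) - (β : MIdx p), hΔ.2 α.2 tsub_le_self⟩

/-- truncation `M[[s]]_Δ → M[[s]]_{Δ'}` for `Δ' ⊆ Δ` -/
def truncOn {p : ℕ} {Δ Δ' : Set (MIdx p)} (hsub : Δ' ⊆ Δ) {M : Type*}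
    (m : SeriesOn Δ M) : SeriesOn Δ' M :=
  fun α => m ⟨(α : MIdx p), hsub α.2⟩

instance {p : ℕ} {Δ : Set (MIdx p)} {M : Type*} [AddCommMonoid M] :
    AddCommMonoid (SeriesOn Δ M) := Pi.addCommMonoid

namespace Aux

variable {p : ℕ} {Δ : Set (MIdx p)}

theorem add_apply {M : Type*} [AddCommMonoid M] (a b : SeriesOn Δ M)
    (γ : {α : MIdx p // α ∈ Δ}) : (a + b) γ = a γ + b γ := rfl

theorem zero_apply {M : Type*} [AddCommMonoid M] (γ : {α : MIdx p // α ∈ Δ}) :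
    (0 : SeriesOn Δ M) γ = 0 := rfl

theorem sum_apply {M ι : Type*} [AddCommMonoid M] (s : Finset ι) (g : ι → SeriesOn Δ M)
    (γ : {α : MIdx p // α ∈ Δ}) : (∑ i ∈ s, g i) γ = ∑ i ∈ s, g i γ := by
  induction s using Finset.cons_induction with
  | empty => rfl
  | cons a s ha ih => rw [Finset.sum_cons, Finset.sum_cons, add_apply, ih]

/-- the indicator (monomial) series `s^δ₀` -/
def cind {k : Type*} [Zero k] [One k] (δ₀ : MIdx p) : SeriesOn Δ k :=
  fun β => if (β : MIdx p) = δ₀ then 1 else 0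

theorem ksmul_single {k M : Type*} [Semiring k] [AddCommMonoid M] [Module k M]
    (hΔ : IsCoideal Δ) (δ₀ : MIdx p) (m : SeriesOn Δ M) (γ : {α : MIdx p // α ∈ Δ}) :
    ksmulOn hΔ (cind (k := k) δ₀) m γ
      = if h : δ₀ ≤ (γ : MIdx p) then m ⟨(γ : MIdx p) - δ₀, hΔ.2 γ.2 tsub_le_self⟩ else 0 := by
  unfold ksmulOn cind
  split
  · next h =>
    rw [Finset.sum_eq_single (⟨δ₀, Finset.mem_Iic.mpr h⟩ : {x // x ∈ Finset.Iic (γ : MIdx p)})]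
    · rw [if_pos rfl, one_smul]
    · intro b _ hb
      have hne : (b : MIdx p) ≠ δ₀ := fun he => hb (Subtype.ext he)
      rw [if_neg hne, zero_smul]
    · intro hmem; exact absurd (Finset.mem_attach _ _) hmem
  · next h =>
    apply Finset.sum_eq_zero
    intro b _
    have hne : (b : MIdx p) ≠ δ₀ := by
      intro he; exact h (he ▸ Finset.mem_Iic.mp b.2)
    rw [if_neg hne, zero_smul]

theorem map_zero' {E F : Type*} [AddCommMonoid E] [AddCommGroup F]
    (f : SeriesOn Δ E → SeriesOn Δ F)
    (hadd : ∀ m m' : SeriesOn Δ E, f (m + m') = f m + f m') : f 0 = 0 := by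
  funext γ
  have h := congrFun (hadd 0 0) γ
  rw [add_zero] at h
  rw [add_apply] at h
  have h' : f 0 γ + 0 = f 0 γ + f 0 γ := by rw [add_zero]; exact h
  show f 0 γ = 0
  exact (add_left_cancel h').symm

theorem map_sum' {E F ι : Type*} [AddCommMonoid E] [AddCommGroup F]
    (f : SeriesOn Δ E → SeriesOn Δ F)
    (hadd : ∀ m m' : SeriesOn Δ E, f (m + m') = f m + f m')
    (s : Finset ι) (g : ι → SeriesOn Δ E) :
    f (∑ i ∈ s, g i) = ∑ i ∈ s, f (g i) := by
  induction s using Finset.cons_induction with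
  | empty => simpa using map_zero' f hadd
  | cons a s ha ih => rw [Finset.sum_cons, hadd, ih, Finset.sum_cons]

/-- `dd αv i = (αv i + 1) · e_i` -/
def dd {p : ℕ} (αv : MIdx p) (i : Fin p) : MIdx p := fun j => if j = i then αv i + 1 else 0

/-- `i` is the least coordinate where `γ` exceeds `αv` -/
def QQ {p : ℕ} (αv : MIdx p) (i : Fin p) (γ : MIdx p) : Prop :=
  αv i < γ i ∧ ∀ j, j < i → γ j ≤ αv j

theorem dd_le_iff {p : ℕ} (αv : MIdx p) (i : Fin p) (γ : MIdx p) :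
    dd αv i ≤ γ ↔ αv i < γ i := by
  constructor
  · intro h; have := h i; simp only [dd, if_pos rfl, if_true] at this; omega
  · intro h j
    by_cases hj : j = i
    · subst hj; simp only [dd, if_pos rfl, if_true]; omega
    · simp [dd, hj]

/-- the part of `m` supported where `i` is the least coordinate exceeding `αv`, shifted
down by `dd αv i` -/
noncomputable def shiftPart {p : ℕ} {Δ : Set (MIdx p)} {E : Type*} [AddCommMonoid E]
    (αv : MIdx p) (i : Fin p) (m : SeriesOn Δ E) : SeriesOn Δ E := fun β =>
  if h : ((β : MIdx p) + dd αv i) ∈ Δ ∧ QQ αv i ((β : MIdx p) + dd αv i) then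
    m ⟨(β : MIdx p) + dd αv i, h.1⟩ else 0

theorem hterm {k E : Type*} [Semiring k] [AddCommMonoid E] [Module k E]
    (hΔ : IsCoideal Δ) (αv : MIdx p) (m : SeriesOn Δ E)
    (γ : {α : MIdx p // α ∈ Δ}) (i : Fin p) :
    ksmulOn hΔ (cind (k := k) (dd αv i)) (shiftPart αv i m) γ
      = if QQ αv i (γ : MIdx p) then m γ else 0 := by
  rw [ksmul_single]
  split
  · next hle =>
    have e : (γ : MIdx p) - dd αv i + dd αv i = (γ : MIdx p) := tsub_add_cancel_of_le hle
    show shiftPart αv i m ⟨(γ : MIdx p) - dd αv i, _⟩ = _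
    unfold shiftPart
    by_cases hQ : QQ αv i (γ : MIdx p)
    · have h1 : ((γ : MIdx p) - dd αv i + dd αv i) ∈ Δ ∧
          QQ αv i ((γ : MIdx p) - dd αv i + dd αv i) := by rw [e]; exact ⟨γ.2, hQ⟩
      rw [dif_pos h1, if_pos hQ]
      have he : (⟨(γ : MIdx p) - dd αv i + dd αv i, h1.1⟩ : {α : MIdx p // α ∈ Δ}) = γ :=
        Subtype.ext e
      rw [he]
    · rw [dif_neg, if_neg hQ]
      intro hcon
      rw [e] at hcon
      exact hQ hcon.2
  · next hle =>
    rw [if_neg]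
    intro hQ
    exact hle ((dd_le_iff αv i (γ : MIdx p)).mpr hQ.1)

theorem decompose {k E : Type*} [Semiring k] [AddCommGroup E] [Module k E]
    (hΔ : IsCoideal Δ) (α : {a : MIdx p // a ∈ Δ}) (m : SeriesOn Δ E)
    (hm : ∀ β : {a : MIdx p // a ∈ Δ}, (β : MIdx p) ≤ (α : MIdx p) → m β = 0) :
    m = ∑ i : Fin p, ksmulOn hΔ (cind (k := k) (dd (α : MIdx p) i)) (shiftPart (α : MIdx p) i m) := by
  funext γ
  rw [sum_apply]
  by_cases hle : (γ : MIdx p) ≤ (α : MIdx p)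
  · rw [hm γ hle]
    symm
    apply Finset.sum_eq_zero
    intro i _
    rw [hterm hΔ _ m γ i, if_neg]
    intro hQ
    exact absurd hQ.1 (not_lt.mpr (hle i))
  · have hex : ∃ i, (α : MIdx p) i < (γ : MIdx p) i := by
      rw [Pi.le_def] at hle; push_neg at hle
      obtain ⟨i, hi⟩ := hle; exact ⟨i, hi⟩
    set S : Finset (Fin p) := Finset.univ.filter (fun i => (α : MIdx p) i < (γ : MIdx p) i) with hS
    have hSne : S.Nonempty := by
      obtain ⟨i, hi⟩ := hex; exact ⟨i, by simp [hS, hi]⟩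
    set i₀ := S.min' hSne with hi₀
    have hi₀S : i₀ ∈ S := S.min'_mem hSne
    have hi₀lt : (α : MIdx p) i₀ < (γ : MIdx p) i₀ := by
      have := hi₀S; rw [hS] at this; simpa using this
    have hQ₀ : QQ (α : MIdx p) i₀ (γ : MIdx p) := by
      refine ⟨hi₀lt, fun j hj => ?_⟩
      by_contra hcon
      have hjS : j ∈ S := by simp [hS, not_le.mp hcon]
      exact absurd (S.min'_le j hjS) (not_le.mpr hj)
    symm
    rw [Finset.sum_eq_single i₀]
    · rw [hterm hΔ _ m γ i₀, if_pos hQ₀]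
    · intro b _ hb
      rw [hterm hΔ _ m γ b, if_neg]
      intro hQb
      have hbS : b ∈ S := by simp [hS, hQb.1]
      have : i₀ < b := lt_of_le_of_ne (S.min'_le b hbS) (Ne.symm hb)
      exact absurd hi₀lt (not_lt.mpr (hQb.2 i₀ this))
    · intro hmem; exact absurd (Finset.mem_univ i₀) hmem

theorem key {k E F : Type*} [Semiring k] [AddCommGroup E] [Module k E]
    [AddCommGroup F] [Module k F]
    (hΔ : IsCoideal Δ) (f : SeriesOn Δ E → SeriesOn Δ F)
    (hadd : ∀ m m' : SeriesOn Δ E, f (m + m') = f m + f m')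
    (hlin : ∀ (c : SeriesOn Δ k) (m : SeriesOn Δ E), f (ksmulOn hΔ c m) = ksmulOn hΔ c (f m))
    (α : {a : MIdx p // a ∈ Δ}) (m : SeriesOn Δ E)
    (hm : ∀ β : {a : MIdx p // a ∈ Δ}, (β : MIdx p) ≤ (α : MIdx p) → m β = 0) :
    f m α = 0 := by
  rw [decompose (k := k) hΔ α m hm, map_sum' f hadd, sum_apply]
  apply Finset.sum_eq_zero
  intro i _
  rw [hlin, ksmul_single, dif_neg]
  intro h
  exact lt_irrefl _ ((dd_le_iff _ _ _).mp h)

theorem agree {k E F : Type*} [Semiring k] [AddCommGroup E] [Module k E]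
    [AddCommGroup F] [Module k F]
    (hΔ : IsCoideal Δ) (f : SeriesOn Δ E → SeriesOn Δ F)
    (hadd : ∀ m m' : SeriesOn Δ E, f (m + m') = f m + f m')
    (hlin : ∀ (c : SeriesOn Δ k) (m : SeriesOn Δ E), f (ksmulOn hΔ c m) = ksmulOn hΔ c (f m))
    (α : {a : MIdx p // a ∈ Δ}) (m m' : SeriesOn Δ E)
    (h : ∀ β : {a : MIdx p // a ∈ Δ}, (β : MIdx p) ≤ (α : MIdx p) → m β = m' β) :
    f m α = f m' α := by
  have hmd : m = m' + (show SeriesOn Δ E from fun β => m β - m' β) := by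
    funext β
    show m β = m' β + (m β - m' β)
    abel
  have hd : f (show SeriesOn Δ E from fun β => m β - m' β) α = 0 :=
    key hΔ f hadd hlin α _ (fun β hβ => by show m β - m' β = 0; rw [h β hβ, sub_self])
  rw [hmd, hadd, add_apply, hd, add_zero]

/-- extension by zero `M[[s]]_{Δ'} → M[[s]]_Δ` -/
noncomputable def extOn {p : ℕ} {Δ Δ' : Set (MIdx p)} (hsub : Δ' ⊆ Δ) {M : Type*} [Zero M]
    (m : SeriesOn Δ' M) : SeriesOn Δ M :=
  fun β => if h : (β : MIdx p) ∈ Δ' then m ⟨(β : MIdx p), h⟩ else 0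

theorem extOn_pos {p : ℕ} {Δ Δ' : Set (MIdx p)} (hsub : Δ' ⊆ Δ) {M : Type*} [Zero M]
    (m : SeriesOn Δ' M) (β : {a : MIdx p // a ∈ Δ}) (h : (β : MIdx p) ∈ Δ') :
    extOn hsub m β = m ⟨(β : MIdx p), h⟩ := dif_pos h

end Aux

/-- Every `k[[s]]_Δ`-linear map `f : E[[s]]_Δ → F[[s]]_Δ` is continuous
for the product of discrete topologies, maps the submodule of classes of series whose
support is disjoint from `Δ'` into the corresponding submodule, and induces a unique
`k[[s]]_{Δ'}`-linear map `f̄ : E[[s]]_{Δ'} → F[[s]]_{Δ'}` commuting with the truncations. -/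
theorem stmt3 (k A E F : Type*) [CommRing k] [CommRing A] [Algebra k A]
    [AddCommGroup E] [Module k E] [Module A E]
    [AddCommGroup F] [Module k F] [Module A F]
    (p : ℕ) (Δ Δ' : Set (MIdx p)) (hΔ : IsCoideal Δ) (hΔ' : IsCoideal Δ') (hsub : Δ' ⊆ Δ)
    (f : SeriesOn Δ E → SeriesOn Δ F)
    (hadd : ∀ m m' : SeriesOn Δ E, f (m + m') = f m + f m')
    (hlin : ∀ (c : SeriesOn Δ k) (m : SeriesOn Δ E), f (ksmulOn hΔ c m) = ksmulOn hΔ c (f m)) :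
    -- `f` is continuous for the product of the discrete topologies
    (@Continuous (SeriesOn Δ E) (SeriesOn Δ F)
        (@Pi.topologicalSpace _ (fun _ => E) (fun _ => ⊥))
        (@Pi.topologicalSpace _ (fun _ => F) (fun _ => ⊥)) f)
    -- `f (Δ'_E/Δ_E) ⊆ Δ'_F/Δ_F`
    ∧ (∀ m : SeriesOn Δ E, (∀ α : {α : MIdx p // α ∈ Δ}, (α : MIdx p) ∈ Δ' → m α = 0) →
        ∀ α : {α : MIdx p // α ∈ Δ}, (α : MIdx p) ∈ Δ' → f m α = 0)
    -- unique `k[[s]]_{Δ'}`-linear `f̄` commuting with the truncations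
    ∧ (∃! fbar : SeriesOn Δ' E → SeriesOn Δ' F,
        ((∀ m m' : SeriesOn Δ' E, fbar (m + m') = fbar m + fbar m')
          ∧ (∀ (c : SeriesOn Δ' k) (m : SeriesOn Δ' E),
              fbar (ksmulOn hΔ' c m) = ksmulOn hΔ' c (fbar m)))
        ∧ ∀ m : SeriesOn Δ E, truncOn hsub (f m) = fbar (truncOn hsub m)) := by
  refine ⟨?_, ?_, ?_⟩
  · -- continuity
    letI : TopologicalSpace E := ⊥
    letI : TopologicalSpace F := ⊥
    haveI : DiscreteTopology E := ⟨rfl⟩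
    haveI : DiscreteTopology F := ⟨rfl⟩
    have hc : Continuous (show ({α : MIdx p // α ∈ Δ} → E) → ({α : MIdx p // α ∈ Δ} → F)
        from f) := by
      apply continuous_pi
      intro γ
      rw [continuous_def]
      intro s _
      rw [isOpen_iff_forall_mem_open]
      intro m₀ hm₀
      refine ⟨{m : {α : MIdx p // α ∈ Δ} → E | ∀ β : {a : MIdx p // a ∈ Δ},
          (β : MIdx p) ≤ (γ : MIdx p) → m β = m₀ β}, ?_, ?_, fun β _ => rfl⟩
      · intro m hm
        show f m γ ∈ s
        rw [Aux.agree hΔ f hadd hlin γ m m₀ hm]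
        exact hm₀
      · have hfin : {β : {a : MIdx p // a ∈ Δ} | (β : MIdx p) ≤ (γ : MIdx p)}.Finite := by
          have : {β : {a : MIdx p // a ∈ Δ} | (β : MIdx p) ≤ (γ : MIdx p)}
              = Subtype.val ⁻¹' Set.Iic (γ : MIdx p) := rfl
          rw [this]
          exact (Set.finite_Iic _).preimage (fun a _ b _ h => Subtype.val_injective h)
        have heq : {m : {α : MIdx p // α ∈ Δ} → E | ∀ β : {a : MIdx p // a ∈ Δ},
              (β : MIdx p) ≤ (γ : MIdx p) → m β = m₀ β}
            = ⋂ β ∈ {β : {a : MIdx p // a ∈ Δ} | (β : MIdx p) ≤ (γ : MIdx p)},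
              (fun m : {α : MIdx p // α ∈ Δ} → E => m β) ⁻¹' {m₀ β} := by
          ext m; simp [Set.mem_iInter]
        rw [heq]
        exact hfin.isOpen_biInter fun β _ =>
          (continuous_apply β).isOpen_preimage _ (isOpen_discrete _)
    exact hc
  · -- support
    intro m h0 α hα'
    exact Aux.key hΔ f hadd hlin α m (fun β hβ => h0 β (hΔ'.2 hα' hβ))
  · -- unique induced map
    refine ⟨fun m' => truncOn hsub (f (Aux.extOn hsub m')), ⟨⟨?_, ?_⟩, ?_⟩, ?_⟩
    · -- additivity
      intro m m'
      have hext : Aux.extOn hsub (m + m') = Aux.extOn hsub m + Aux.extOn hsub m' := by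
        funext β
        show Aux.extOn hsub (m + m') β = Aux.extOn hsub m β + Aux.extOn hsub m' β
        unfold Aux.extOn
        by_cases h : (β : MIdx p) ∈ Δ'
        · rw [dif_pos h, dif_pos h, dif_pos h]; rfl
        · rw [dif_neg h, dif_neg h, dif_neg h, add_zero]
      show truncOn hsub (f (Aux.extOn hsub (m + m'))) = _
      rw [hext, hadd]
      rfl
    · -- linearity
      intro c m
      funext α
      have hβ2 : (α : MIdx p) ∈ Δ := hsub α.2
      show f (Aux.extOn hsub (ksmulOn hΔ' c m)) ⟨(α : MIdx p), hβ2⟩ = _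
      have step1 : f (Aux.extOn hsub (ksmulOn hΔ' c m)) ⟨(α : MIdx p), hβ2⟩
          = f (ksmulOn hΔ (Aux.extOn hsub c) (Aux.extOn hsub m)) ⟨(α : MIdx p), hβ2⟩ := by
        apply Aux.agree hΔ f hadd hlin
        intro β hβ
        have hβ' : (β : MIdx p) ∈ Δ' := hΔ'.2 α.2 hβ
        rw [Aux.extOn_pos hsub _ β hβ']
        show ksmulOn hΔ' c m ⟨(β : MIdx p), hβ'⟩ = ksmulOn hΔ (Aux.extOn hsub c) (Aux.extOn hsub m) β
        unfold ksmulOn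
        apply Finset.sum_congr rfl
        intro δ _
        rw [Aux.extOn_pos hsub c _ (hΔ'.2 hβ' (Finset.mem_Iic.mp δ.2)),
          Aux.extOn_pos hsub m _ (hΔ'.2 hβ' tsub_le_self)]
      rw [step1, hlin]
      show ksmulOn hΔ (Aux.extOn hsub c) (f (Aux.extOn hsub m)) ⟨(α : MIdx p), hβ2⟩
        = ksmulOn hΔ' c (truncOn hsub (f (Aux.extOn hsub m))) α
      unfold ksmulOn
      apply Finset.sum_congr rfl
      intro δ _
      rw [Aux.extOn_pos hsub c _ (hΔ'.2 α.2 (Finset.mem_Iic.mp δ.2))]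
      rfl
    · -- commuting
      intro m
      funext α
      show f m ⟨(α : MIdx p), hsub α.2⟩
        = f (Aux.extOn hsub (truncOn hsub m)) ⟨(α : MIdx p), hsub α.2⟩
      apply Aux.agree hΔ f hadd hlin
      intro β hβ
      have hβ' : (β : MIdx p) ∈ Δ' := hΔ'.2 α.2 hβ
      rw [Aux.extOn_pos hsub _ β hβ']
      rfl
    · -- uniqueness
      rintro g ⟨-, hg⟩
      funext m'
      have h1 : truncOn hsub (Aux.extOn hsub m') = m' := by
        funext α
        show Aux.extOn hsub m' ⟨(α : MIdx p), hsub α.2⟩ = m' α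
        rw [Aux.extOn_pos hsub m' _ α.2]
      have h2 := hg (Aux.extOn hsub m')
      rw [h1] at h2
      exact h2.symm


end HS
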